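/- Let L ≥ 0 and define u: ℝ²\{0} → ℝ² by u(x) = √(|x|² + L²) · x/|x|. Then det Du(x) = 1 for all x ≠ 0, and for 0 < ε < R, ∫_{ε<|x|<R} |Du|²/2 dx ≤ πR² + πL² log R + πL² |log ε|. -/

import Mathlib

open Real MeasureTheory Metric

noncomputable section RadialCavitationAux

local notation "EE" => EuclideanSpace ℝ (Fin 2)

theorem radial_cavitation_hasFDerivAt (L : ℝ) (x : EE) (hx : x ≠ 0) :
    HasFDerivAt (fun y : EE => (Real.sqrt (‖y‖ ^ 2 + L ^ 2) / ‖y‖) • y)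
      ((Real.sqrt (‖x‖ ^ 2 + L ^ 2) / ‖x‖) • ContinuousLinearMap.id ℝ EE +
        ((-(L ^ 2) / (Real.sqrt (‖x‖ ^ 2 + L ^ 2) * ‖x‖ ^ 3)) • innerSL ℝ x).smulRight x) x := by
  have hr : (0:ℝ) < ‖x‖ := norm_pos_iff.2 hx
  have hq : (0:ℝ) < ‖x‖ ^ 2 + L ^ 2 := by positivity
  have hs : (0:ℝ) < Real.sqrt (‖x‖ ^ 2 + L ^ 2) := Real.sqrt_pos.2 hq
  have hr2 : (0:ℝ) < ‖x‖ ^ 2 := by positivity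
  have hss : Real.sqrt (‖x‖ ^ 2 + L ^ 2) * Real.sqrt (‖x‖ ^ 2 + L ^ 2) = ‖x‖ ^ 2 + L ^ 2 :=
    Real.mul_self_sqrt hq.le
  have h1 : HasFDerivAt (fun y : EE => ‖y‖ ^ 2 + L ^ 2) ((2:ℝ) • innerSL ℝ x) x := by
    have := (hasFDerivAt_id x).norm_sq.add_const (L ^ 2)
    refine this.congr_fderiv ?_
    ext v; simp [two_smul]
  have h2 : HasFDerivAt (fun y : EE => Real.sqrt (‖y‖ ^ 2 + L ^ 2))
      ((Real.sqrt (‖x‖ ^ 2 + L ^ 2))⁻¹ • innerSL ℝ x) x := by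
    have hd := (Real.hasDerivAt_sqrt hq.ne').comp_hasFDerivAt x h1
    refine hd.congr_fderiv ?_
    ext v
    simp only [ContinuousLinearMap.smul_apply]
    rw [smul_eq_mul, smul_eq_mul, smul_eq_mul]
    field_simp
  have h3 : HasFDerivAt (fun y : EE => ‖y‖) ((‖x‖)⁻¹ • innerSL ℝ x) x := by
    have h1' : HasFDerivAt (fun y : EE => ‖y‖ ^ 2) ((2:ℝ) • innerSL ℝ x) x := by
      have := (hasFDerivAt_id x).norm_sq
      refine this.congr_fderiv ?_
      ext v; simp [two_smul]
    have hd := (Real.hasDerivAt_sqrt hr2.ne').comp_hasFDerivAt x h1'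
    have heq : (fun y : EE => ‖y‖) = fun y : EE => Real.sqrt (‖y‖ ^ 2) := by
      funext y; exact (Real.sqrt_sq (norm_nonneg y)).symm
    rw [heq]
    refine hd.congr_fderiv ?_
    ext v
    simp only [ContinuousLinearMap.smul_apply]
    rw [smul_eq_mul, smul_eq_mul, smul_eq_mul, Real.sqrt_sq hr.le]
    field_simp
  have hinv : HasFDerivAt (fun y : EE => (‖y‖)⁻¹)
      ((-(‖x‖ ^ 2)⁻¹ * (‖x‖)⁻¹) • innerSL ℝ x) x := by
    have hd := (hasDerivAt_inv hr.ne').comp_hasFDerivAt x h3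
    refine hd.congr_fderiv ?_
    ext v
    simp only [ContinuousLinearMap.smul_apply]
    rw [smul_eq_mul, smul_eq_mul, smul_eq_mul]
    ring
  have h4 : HasFDerivAt (fun y : EE => Real.sqrt (‖y‖ ^ 2 + L ^ 2) / ‖y‖)
      ((-(L ^ 2) / (Real.sqrt (‖x‖ ^ 2 + L ^ 2) * ‖x‖ ^ 3)) • innerSL ℝ x) x := by
    have hd := h2.mul hinv
    have key : ∀ p : ℝ, (-(L ^ 2) / (Real.sqrt (‖x‖ ^ 2 + L ^ 2) * ‖x‖ ^ 3)) * p
        = Real.sqrt (‖x‖ ^ 2 + L ^ 2) * ((-(‖x‖ ^ 2)⁻¹ * ‖x‖⁻¹) * p)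
          + ‖x‖⁻¹ * ((Real.sqrt (‖x‖ ^ 2 + L ^ 2))⁻¹ * p) := by
      intro p
      field_simp
      ring_nf
      have hc : Real.sqrt (L ^ 2 + ‖x‖ ^ 2) ^ 3
          = (L ^ 2 + ‖x‖ ^ 2) * Real.sqrt (L ^ 2 + ‖x‖ ^ 2) := by
        rw [pow_succ, Real.sq_sqrt (by positivity)]
      rw [Real.sq_sqrt (by positivity)]; ring
    simp only [div_eq_mul_inv]
    refine hd.congr_fderiv ?_
    ext v
    simp only [ContinuousLinearMap.smul_apply, ContinuousLinearMap.add_apply, smul_eq_mul]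
    have := key ((innerSL ℝ x) v)
    rw [div_eq_mul_inv] at this
    exact this.symm
  have := h4.smul (hasFDerivAt_id x)
  exact this

theorem radial_cavitation_det (L : ℝ) (x : EE) (hx : x ≠ 0) :
    LinearMap.det ((((Real.sqrt (‖x‖ ^ 2 + L ^ 2) / ‖x‖) • ContinuousLinearMap.id ℝ EE +
        ((-(L ^ 2) / (Real.sqrt (‖x‖ ^ 2 + L ^ 2) * ‖x‖ ^ 3)) • innerSL ℝ x).smulRight x :
        EE →L[ℝ] EE) : EE →ₗ[ℝ] EE)) = 1 := by
  have hr : (0:ℝ) < ‖x‖ := norm_pos_iff.2 hx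
  have hq : (0:ℝ) < ‖x‖ ^ 2 + L ^ 2 := by positivity
  have hs : (0:ℝ) < Real.sqrt (‖x‖ ^ 2 + L ^ 2) := Real.sqrt_pos.2 hq
  have hss : Real.sqrt (‖x‖ ^ 2 + L ^ 2) * Real.sqrt (‖x‖ ^ 2 + L ^ 2) = ‖x‖ ^ 2 + L ^ 2 :=
    Real.mul_self_sqrt hq.le
  set a : ℝ := Real.sqrt (‖x‖ ^ 2 + L ^ 2) / ‖x‖ with ha
  set c : ℝ := -(L ^ 2) / (Real.sqrt (‖x‖ ^ 2 + L ^ 2) * ‖x‖ ^ 3) with hc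
  set b := (EuclideanSpace.basisFun (Fin 2) ℝ).toBasis with hb
  rw [← LinearMap.det_toMatrix b, Matrix.det_fin_two]
  have hent : ∀ i j : Fin 2, LinearMap.toMatrix b b
      (((a • ContinuousLinearMap.id ℝ EE + (c • innerSL ℝ x).smulRight x : EE →L[ℝ] EE)) :
        EE →ₗ[ℝ] EE) i j = (if i = j then a else 0) + c * x j * x i := by
    intro i j
    rw [LinearMap.toMatrix_apply]
    simp [hb, EuclideanSpace.basisFun_apply, real_inner_comm,
      EuclideanSpace.inner_single_right, EuclideanSpace.single_apply, mul_comm]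
  rw [hent, hent, hent, hent]
  have hnorm : x 0 ^ 2 + x 1 ^ 2 = ‖x‖ ^ 2 := by
    rw [EuclideanSpace.norm_eq, Real.sq_sqrt (by positivity)]
    simp [Fin.sum_univ_two, sq]
  simp only [if_pos rfl, if_neg (by decide : ¬(0:Fin 2) = 1), if_neg (by decide : ¬(1:Fin 2) = 0)]
  simp only [if_true]
  have expand : (a + c * x 0 * x 0) * (a + c * x 1 * x 1) -
      (0 + c * x 1 * x 0) * (0 + c * x 0 * x 1)
      = a * a + a * c * (x 0 ^ 2 + x 1 ^ 2) := by ring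
  rw [expand, hnorm, ha, hc]
  field_simp
  rw [Real.sq_sqrt hq.le]; ring

theorem radial_cavitation_sum_bound (L : ℝ) (x : EE) (hx : x ≠ 0) :
    (∑ i, ‖((Real.sqrt (‖x‖ ^ 2 + L ^ 2) / ‖x‖) • ContinuousLinearMap.id ℝ EE +
        ((-(L ^ 2) / (Real.sqrt (‖x‖ ^ 2 + L ^ 2) * ‖x‖ ^ 3)) • innerSL ℝ x).smulRight x :
        EE →L[ℝ] EE) (EuclideanSpace.basisFun (Fin 2) ℝ i)‖ ^ 2)
      ≤ 2 + L ^ 2 / ‖x‖ ^ 2 := by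
  have hr : (0:ℝ) < ‖x‖ := norm_pos_iff.2 hx
  have hq : (0:ℝ) < ‖x‖ ^ 2 + L ^ 2 := by positivity
  set s : ℝ := Real.sqrt (‖x‖ ^ 2 + L ^ 2) with hsdef
  have hs : (0:ℝ) < s := Real.sqrt_pos.2 hq
  have hs2 : s ^ 2 = ‖x‖ ^ 2 + L ^ 2 := Real.sq_sqrt hq.le
  clear_value s
  set a : ℝ := s / ‖x‖ with ha
  set c : ℝ := -(L ^ 2) / (s * ‖x‖ ^ 3) with hc
  have hnorm : x 0 ^ 2 + x 1 ^ 2 = ‖x‖ ^ 2 := by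
    rw [EuclideanSpace.norm_eq, Real.sq_sqrt (by positivity)]
    simp [Fin.sum_univ_two, sq]
  have happ : ∀ i : Fin 2,
      (a • ContinuousLinearMap.id ℝ EE + (c • innerSL ℝ x).smulRight x : EE →L[ℝ] EE)
        (EuclideanSpace.basisFun (Fin 2) ℝ i)
      = a • (EuclideanSpace.basisFun (Fin 2) ℝ i : EE) + (c * x i) • x := by
    intro i
    simp [EuclideanSpace.basisFun_apply, EuclideanSpace.inner_single_right, mul_comm]
  have hnsq : ∀ i : Fin 2,
      ‖a • (EuclideanSpace.basisFun (Fin 2) ℝ i : EE) + (c * x i) • x‖ ^ 2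
      = a ^ 2 + 2 * (a * (c * x i) * x i) + (c * x i) ^ 2 * ‖x‖ ^ 2 := by
    intro i
    rw [@norm_add_sq_real]
    have h1 : ‖a • (EuclideanSpace.basisFun (Fin 2) ℝ i : EE)‖ ^ 2 = a ^ 2 := by
      rw [norm_smul]
      simp [EuclideanSpace.basisFun_apply, EuclideanSpace.norm_single, abs_sq]
    have h2 : (inner ℝ (a • (EuclideanSpace.basisFun (Fin 2) ℝ i : EE)) ((c * x i) • x) : ℝ)
        = a * (c * x i) * x i := by
      rw [real_inner_smul_left, real_inner_smul_right]
      simp [EuclideanSpace.basisFun_apply, EuclideanSpace.inner_single_left]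
      ring
    have h3 : ‖(c * x i) • x‖ ^ 2 = (c * x i) ^ 2 * ‖x‖ ^ 2 := by
      rw [norm_smul, mul_pow]
      simp only [Real.norm_eq_abs, sq_abs]
    rw [h1, h2, h3]
  simp only [happ, hnsq, Fin.sum_univ_two]
  have key : a ^ 2 + 2 * (a * (c * x 0) * x 0) + (c * x 0) ^ 2 * ‖x‖ ^ 2
      + (a ^ 2 + 2 * (a * (c * x 1) * x 1) + (c * x 1) ^ 2 * ‖x‖ ^ 2)
      = (‖x‖ ^ 2 + L ^ 2) / ‖x‖ ^ 2 + ‖x‖ ^ 2 / (‖x‖ ^ 2 + L ^ 2) := by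
    have hexp : a ^ 2 + 2 * (a * (c * x 0) * x 0) + (c * x 0) ^ 2 * ‖x‖ ^ 2
        + (a ^ 2 + 2 * (a * (c * x 1) * x 1) + (c * x 1) ^ 2 * ‖x‖ ^ 2)
        = 2 * a ^ 2 + 2 * a * c * (x 0 ^ 2 + x 1 ^ 2) + c ^ 2 * (x 0 ^ 2 + x 1 ^ 2) * ‖x‖ ^ 2 := by
      ring
    rw [hexp, hnorm, ha, hc]
    have hL2 : L ^ 2 = s ^ 2 - ‖x‖ ^ 2 := by linarith
    rw [hL2]
    field_simp
    ring
  rw [key]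
  have h4 : (‖x‖ ^ 2 + L ^ 2) / ‖x‖ ^ 2 = 1 + L ^ 2 / ‖x‖ ^ 2 := by
    field_simp
  have h5 : ‖x‖ ^ 2 / (‖x‖ ^ 2 + L ^ 2) ≤ 1 := by
    rw [div_le_one hq]; nlinarith
  linarith

theorem radial_cavitation_polar (ε R : ℝ) (hε : 0 < ε) (hεR : ε < R) :
    ∫ x in ball (0 : EE) R \ closedBall 0 ε, (‖x‖ ^ 2)⁻¹
      = 2 * (π * (Real.log R - Real.log ε)) := by
  classical
  have hA : MeasurableSet (ball (0 : EE) R \ closedBall 0 ε) :=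
    measurableSet_ball.diff measurableSet_closedBall
  rw [← integral_indicator hA]
  have hfun : (Set.indicator (ball (0 : EE) R \ closedBall 0 ε) fun x : EE => (‖x‖ ^ 2)⁻¹)
      = fun x : EE => Set.indicator (Set.Ioo ε R) (fun r : ℝ => (r ^ 2)⁻¹) ‖x‖ := by
    funext x
    rw [Set.indicator_apply, Set.indicator_apply]
    congr 1
    simp only [Set.mem_diff, mem_ball_zero_iff, mem_closedBall_zero_iff, Set.mem_Ioo,
      eq_iff_iff, not_le]
    tauto
  rw [hfun, integral_fun_norm_addHaar volume (Set.indicator (Set.Ioo ε R) fun r : ℝ => (r ^ 2)⁻¹)]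
  have hdim : Module.finrank ℝ (EuclideanSpace ℝ (Fin 2)) = 2 := by
    simp [finrank_euclideanSpace]
  rw [hdim]
  have hvol : (volume (ball (0 : EE) 1)).toReal = π := by
    rw [EuclideanSpace.volume_ball]
    simp only [Fintype.card_fin]
    norm_num [Real.Gamma_two, Real.sq_sqrt pi_pos.le]
    exact pi_pos.le
  rw [measureReal_def, hvol]
  have hins : ∀ y : ℝ, y ^ (2 - 1) • Set.indicator (Set.Ioo ε R) (fun r : ℝ => (r ^ 2)⁻¹) y
      = Set.indicator (Set.Ioo ε R) (fun r : ℝ => r • (r ^ 2)⁻¹) y := by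
    intro y
    rw [Set.indicator_apply, Set.indicator_apply]
    split <;> simp
  simp only [hins]
  rw [integral_indicator measurableSet_Ioo,
    Measure.restrict_restrict_of_subset (Set.Ioo_subset_Ioi_self.trans (Set.Ioi_subset_Ioi hε.le))]
  have hIoo : ∫ x in Set.Ioo ε R, x • (x ^ 2)⁻¹ = Real.log R - Real.log ε := by
    rw [← integral_Ioc_eq_integral_Ioo, ← intervalIntegral.integral_of_le hεR.le]
    have hcg : ∀ x ∈ Set.uIcc ε R, x • (x ^ 2)⁻¹ = x⁻¹ := by
      intro x hxm
      rw [Set.uIcc_of_le hεR.le] at hxm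
      have hx0 : x ≠ 0 := (hε.trans_le hxm.1).ne'
      field_simp
      rw [smul_eq_mul]; field_simp
    rw [intervalIntegral.integral_congr hcg, integral_inv_of_pos hε (hε.trans hεR),
      Real.log_div (hε.trans hεR).ne' hε.ne']
  rw [hIoo]
  simp only [smul_eq_mul, nsmul_eq_mul]
  ring

theorem radial_int_aux (C : ℝ) (s : Set EE) (hs : MeasurableSet s) (hfin : volume s ≠ ⊤)
    (f : EE → ℝ) (hm : Measurable f) (hb : ∀ x ∈ s, |f x| ≤ C) : IntegrableOn f s := by
  apply Integrable.mono' (g := fun _ => C) (integrableOn_const hfin)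
    hm.aestronglyMeasurable.restrict
  rw [ae_restrict_iff' hs]
  exact Filter.Eventually.of_forall fun x hx => by rw [Real.norm_eq_abs]; exact hb x hx

end RadialCavitationAux

set_option maxHeartbeats 2000000 in
theorem radial_cavitation_map (L : ℝ) (hL : 0 ≤ L) (ε R : ℝ) (hε : 0 < ε) (hεR : ε < R) :
    (∀ x : EuclideanSpace ℝ (Fin 2), x ≠ 0 →
      LinearMap.det ((fderiv ℝ (fun y : EuclideanSpace ℝ (Fin 2) =>
          (Real.sqrt (‖y‖ ^ 2 + L ^ 2) / ‖y‖) • y) x) :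
            EuclideanSpace ℝ (Fin 2) →ₗ[ℝ] EuclideanSpace ℝ (Fin 2)) = 1) ∧
    (∫ x in Metric.ball (0 : EuclideanSpace ℝ (Fin 2)) R \ Metric.closedBall 0 ε,
        (∑ i, ‖fderiv ℝ (fun y : EuclideanSpace ℝ (Fin 2) =>
            (Real.sqrt (‖y‖ ^ 2 + L ^ 2) / ‖y‖) • y) x
          (EuclideanSpace.basisFun (Fin 2) ℝ i)‖ ^ 2) / 2)
      ≤ π * R ^ 2 + π * L ^ 2 * Real.log R + π * L ^ 2 * |Real.log ε| := by
  have hR : (0:ℝ) < R := hε.trans hεR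
  set u : EuclideanSpace ℝ (Fin 2) → EuclideanSpace ℝ (Fin 2) :=
    fun y => (Real.sqrt (‖y‖ ^ 2 + L ^ 2) / ‖y‖) • y with hu
  constructor
  · intro x hx
    rw [(radial_cavitation_hasFDerivAt L x hx).fderiv]
    exact radial_cavitation_det L x hx
  · set A := Metric.ball (0 : EuclideanSpace ℝ (Fin 2)) R \ Metric.closedBall 0 ε with hAdef
    have hA : MeasurableSet A := measurableSet_ball.diff measurableSet_closedBall
    have hmem : ∀ x ∈ A, ε < ‖x‖ ∧ ‖x‖ < R := by
      intro x hxA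
      obtain ⟨h1, h2⟩ := hxA
      rw [mem_ball_zero_iff] at h1
      rw [Metric.mem_closedBall, dist_zero_right, not_le] at h2
      exact ⟨h2, h1⟩
    have hAfin : volume A ≠ ⊤ :=
      ((measure_mono Set.diff_subset).trans_lt measure_ball_lt_top).ne
    set g : EuclideanSpace ℝ (Fin 2) → ℝ := fun x => 1 + L ^ 2 / 2 * (‖x‖ ^ 2)⁻¹ with hgdef
    have hgm : Measurable g :=
      measurable_const.add (((measurable_norm.pow_const 2).inv).const_mul _)
    have hgb : ∀ x ∈ A, |g x| ≤ 1 + L ^ 2 / 2 * (ε ^ 2)⁻¹ := by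
      intro x hxA
      have h1 := (hmem x hxA).1
      have hinv : (‖x‖ ^ 2)⁻¹ ≤ (ε ^ 2)⁻¹ := by
        apply inv_anti₀ (by positivity)
        nlinarith
      have hg0 : 0 ≤ g x := by
        have : (0:ℝ) ≤ (‖x‖ ^ 2)⁻¹ := by positivity
        simp only [hgdef]; positivity
      rw [abs_of_nonneg hg0]
      have : L ^ 2 / 2 * (‖x‖ ^ 2)⁻¹ ≤ L ^ 2 / 2 * (ε ^ 2)⁻¹ :=
        mul_le_mul_of_nonneg_left hinv (by positivity)
      simp only [hgdef]
      linarith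
    have hgint : IntegrableOn g A :=
      radial_int_aux (1 + L ^ 2 / 2 * (ε ^ 2)⁻¹) A hA hAfin g hgm hgb
    have hint2 : IntegrableOn (fun x : EuclideanSpace ℝ (Fin 2) => L ^ 2 / 2 * (‖x‖ ^ 2)⁻¹) A := by
      apply radial_int_aux (L ^ 2 / 2 * (ε ^ 2)⁻¹) A hA hAfin _
        (((measurable_norm.pow_const 2).inv).const_mul _)
      intro x hxA
      have h1 := (hmem x hxA).1
      have hinv : (‖x‖ ^ 2)⁻¹ ≤ (ε ^ 2)⁻¹ := by
        apply inv_anti₀ (by positivity)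
        nlinarith
      rw [show (fun x : EuclideanSpace ℝ (Fin 2) => ‖x‖ ^ 2)⁻¹ x = (‖x‖ ^ 2)⁻¹ from rfl,
        abs_of_nonneg (a := L ^ 2 / 2 * (‖x‖ ^ 2)⁻¹) (by positivity)]
      exact mul_le_mul_of_nonneg_left hinv (by positivity)
    have hFle : ∀ x ∈ A, (∑ i, ‖fderiv ℝ u x (EuclideanSpace.basisFun (Fin 2) ℝ i)‖ ^ 2) / 2
        ≤ g x := by
      intro x hxA
      have hxne : x ≠ 0 := by
        intro h
        have := (hmem x hxA).1
        rw [h, norm_zero] at this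
        linarith
      rw [hu, (radial_cavitation_hasFDerivAt L x hxne).fderiv]
      have hb := radial_cavitation_sum_bound L x hxne
      have heq : (2 + L ^ 2 / ‖x‖ ^ 2) / 2 = g x := by
        simp only [hgdef, div_eq_mul_inv]
        ring
      linarith
    have hmono : ∫ x in A, (∑ i, ‖fderiv ℝ u x (EuclideanSpace.basisFun (Fin 2) ℝ i)‖ ^ 2) / 2
        ≤ ∫ x in A, g x := by
      apply integral_mono_of_nonneg
      · exact Filter.Eventually.of_forall fun x => by positivity
      · exact hgint
      · exact (ae_restrict_iff' hA).mpr (Filter.Eventually.of_forall hFle)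
    have hsplit : ∫ x in A, g x
        = (volume A).toReal + L ^ 2 / 2 * (2 * (π * (Real.log R - Real.log ε))) := by
      have hc1 : IntegrableOn (fun _ : EuclideanSpace ℝ (Fin 2) => (1:ℝ)) A :=
        radial_int_aux 1 A hA hAfin _ measurable_const (by intro x _; simp)
      rw [hgdef]
      rw [integral_add hc1 hint2]
      rw [integral_const_mul, setIntegral_const, hAdef, radial_cavitation_polar ε R hε hεR]
      simp [measureReal_def]
    have hvolA : (volume A).toReal ≤ π * R ^ 2 := by
      have h1 : volume A ≤ volume (Metric.ball (0 : EuclideanSpace ℝ (Fin 2)) R) :=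
        measure_mono Set.diff_subset
      have h2 : (volume (Metric.ball (0 : EuclideanSpace ℝ (Fin 2)) R)).toReal = π * R ^ 2 := by
        rw [EuclideanSpace.volume_ball]
        simp only [Fintype.card_fin]
        norm_num [Real.Gamma_two, Real.sq_sqrt pi_pos.le]
        rw [ENNReal.toReal_ofReal hR.le, ENNReal.toReal_ofReal pi_pos.le]
        ring
      rw [← h2]
      exact ENNReal.toReal_mono measure_ball_lt_top.ne h1
    have hlog : L ^ 2 / 2 * (2 * (π * (Real.log R - Real.log ε)))
        ≤ π * L ^ 2 * Real.log R + π * L ^ 2 * |Real.log ε| := by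
      have h1 : -Real.log ε ≤ |Real.log ε| := neg_le_abs _
      have h2 : (0:ℝ) ≤ π * L ^ 2 := by positivity
      nlinarith [mul_le_mul_of_nonneg_left h1 h2]
    calc ∫ x in A, (∑ i, ‖fderiv ℝ u x (EuclideanSpace.basisFun (Fin 2) ℝ i)‖ ^ 2) / 2
        ≤ ∫ x in A, g x := hmono
      _ = (volume A).toReal + L ^ 2 / 2 * (2 * (π * (Real.log R - Real.log ε))) := hsplit
      _ ≤ π * R ^ 2 + π * L ^ 2 * Real.log R + π * L ^ 2 * |Real.log ε| := by linarith
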